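/- For any r×c real payoff matrix M with nonnegative entries, any ε > 0, and any k ≥ log_{1+ε}(c), there exists a set S of at most k rows such that for every column j, min_{i∈S} M_{i,j} ≤ (1+ε)·v, where v is the value of the game. -/

import Mathlib

open Finset

theorem dovetailed_minmax_row (r c : ℕ) (hr : 0 < r) (hc : 0 < c)
    (M : Fin r → Fin c → ℝ) (hM : ∀ i j, 0 ≤ M i j)
    (ε : ℝ) (hε : 0 < ε) (k : ℕ) (hk : 0 < k)
    (hkc : Real.log c / Real.log (1 + ε) ≤ k) :
    ∃ S : Finset (Fin r), S.card ≤ k ∧ ∀ j : Fin c, ∃ i ∈ S,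
      M i j ≤ (1 + ε) * (⨅ p : stdSimplex ℝ (Fin r), ⨆ j' : Fin c, ∑ i', p.1 i' * M i' j') := by
  classical
  haveI : Nonempty (Fin r) := ⟨⟨0, hr⟩⟩
  haveI : Nonempty (stdSimplex ℝ (Fin r)) := ⟨⟨_, single_mem_stdSimplex ℝ (⟨0, hr⟩ : Fin r)⟩⟩
  haveI : Nonempty (Fin c) := ⟨⟨0, hc⟩⟩
  set v : ℝ := ⨅ p : stdSimplex ℝ (Fin r), ⨆ j' : Fin c, ∑ i', p.1 i' * M i' j' with hv
  have hεpos : (0:ℝ) < 1 + ε := by linarith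
  -- the payoff function
  set f : (Fin r → ℝ) → ℝ := fun p => ⨆ j : Fin c, ∑ i, p i * M i j with hfdef
  have hfeq : ∀ p, f p = Finset.univ.sup' univ_nonempty (fun j : Fin c => ∑ i, p i * M i j) := by
    intro p
    rw [Finset.sup'_univ_eq_ciSup]
  have hcont : Continuous f := by
    have : Continuous (fun p : Fin r → ℝ =>
        Finset.univ.sup' univ_nonempty (fun j : Fin c => ∑ i, p i * M i j)) := by
      apply Continuous.finset_sup'_apply
      intro j _
      exact continuous_finset_sum _ fun i _ => (continuous_apply i).mul continuous_const
    exact (funext hfeq : f = _) ▸ this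
  obtain ⟨p₀, hp₀K, hp₀min⟩ := (isCompact_stdSimplex ℝ (Fin r)).exists_isMinOn
    ⟨_, single_mem_stdSimplex ℝ (⟨0, hr⟩ : Fin r)⟩ hcont.continuousOn
  have hp₀nn : ∀ i, 0 ≤ p₀ i := hp₀K.1
  have hp₀sum : ∑ i, p₀ i = 1 := hp₀K.2
  have hfv : f p₀ ≤ v := le_ciInf fun q => hp₀min q.2
  have hp₀le : ∀ j, ∑ i, p₀ i * M i j ≤ v := by
    intro j
    refine le_trans ?_ hfv
    exact le_ciSup (Set.Finite.bddAbove
      (Set.finite_range fun j' : Fin c => ∑ i, p₀ i * M i j')) j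
  have hv0 : 0 ≤ v := by
    refine le_ciInf fun q => ?_
    refine le_trans ?_ (le_ciSup (Set.Finite.bddAbove
      (Set.finite_range fun j' : Fin c => ∑ i, q.1 i * M i j')) (⟨0, hc⟩ : Fin c))
    exact Finset.sum_nonneg fun i _ => mul_nonneg (q.2.1 i) (hM i _)
  -- good mass lemma
  have good_mass : ∀ j : Fin c,
      ε / (1 + ε) < ∑ i ∈ Finset.univ.filter (fun i => M i j ≤ (1 + ε) * v), p₀ i := by
    intro j
    set B := Finset.univ.filter (fun i : Fin r => ¬ M i j ≤ (1 + ε) * v) with hB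
    set b := ∑ i ∈ B, p₀ i with hbdef
    have hsplit : (∑ i ∈ Finset.univ.filter (fun i => M i j ≤ (1 + ε) * v), p₀ i) + b = 1 := by
      rw [hbdef, hB, Finset.sum_filter_add_sum_filter_not, hp₀sum]
    have hbnn : 0 ≤ b := Finset.sum_nonneg fun i _ => hp₀nn i
    have hblt : b < 1 / (1 + ε) := by
      rcases eq_or_lt_of_le hbnn with hb0 | hbpos
      · rw [← hb0]; positivity
      · obtain ⟨i₀, hi₀B, hi₀pos⟩ : ∃ i₀ ∈ B, 0 < p₀ i₀ := by
          by_contra h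
          push_neg at h
          have : b ≤ 0 := Finset.sum_nonpos fun i hi => h i hi
          linarith
        have hkey : (1 + ε) * v * b < ∑ i ∈ B, p₀ i * M i j := by
          have h1 : ∑ i ∈ B, p₀ i * ((1 + ε) * v) < ∑ i ∈ B, p₀ i * M i j := by
            apply Finset.sum_lt_sum
            · intro i hi
              have : (1 + ε) * v < M i j := by
                have := (Finset.mem_filter.mp hi).2
                linarith [not_le.mp this]
              exact mul_le_mul_of_nonneg_left this.le (hp₀nn i)
            · refine ⟨i₀, hi₀B, ?_⟩
              have : (1 + ε) * v < M i₀ j := not_le.mp (Finset.mem_filter.mp hi₀B).2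
              exact mul_lt_mul_of_pos_left this hi₀pos
          calc (1 + ε) * v * b = ∑ i ∈ B, p₀ i * ((1 + ε) * v) := by
                rw [← Finset.sum_mul, ← hbdef]; ring
            _ < _ := h1
        have hle : ∑ i ∈ B, p₀ i * M i j ≤ v := by
          refine le_trans ?_ (hp₀le j)
          apply Finset.sum_le_sum_of_subset_of_nonneg (Finset.subset_univ _)
          intro i _ _
          exact mul_nonneg (hp₀nn i) (hM i j)
        have hvb : (1 + ε) * v * b < v := lt_of_lt_of_le hkey hle
        have hvpos : 0 < v := by
          rcases eq_or_lt_of_le hv0 with h0 | h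
          · exfalso; rw [← h0] at hvb; simp at hvb
          · exact h
        rw [lt_div_iff₀ hεpos]
        nlinarith
    have : 1 - 1 / (1 + ε) = ε / (1 + ε) := by field_simp; ring
    linarith
  -- greedy cover step
  have step : ∀ T : Finset (Fin c), T.Nonempty →
      ∃ i : Fin r, (ε / (1 + ε)) * T.card <
        ((T.filter (fun j => M i j ≤ (1 + ε) * v)).card : ℝ) := by
    intro T hT
    by_contra h
    push_neg at h
    have hA : ∀ i : Fin r, ∑ j ∈ T, (if M i j ≤ (1 + ε) * v then p₀ i else 0)
        = ((T.filter (fun j => M i j ≤ (1 + ε) * v)).card : ℝ) * p₀ i := by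
      intro i
      rw [Finset.sum_ite, Finset.sum_const, Finset.sum_const_zero, add_zero, nsmul_eq_mul]
    have hlt : (ε / (1 + ε)) * T.card < ∑ j ∈ T,
        ∑ i, (if M i j ≤ (1 + ε) * v then p₀ i else 0) := by
      have : ∀ j ∈ T, ε / (1 + ε) < ∑ i, (if M i j ≤ (1 + ε) * v then p₀ i else 0) := by
        intro j _
        have := good_mass j
        rwa [Finset.sum_filter] at this
      calc (ε / (1 + ε)) * T.card = ∑ _j ∈ T, ε / (1 + ε) := by
            rw [Finset.sum_const, nsmul_eq_mul]; ring
        _ < _ := Finset.sum_lt_sum_of_nonempty hT this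
    have hge : ∑ j ∈ T, ∑ i, (if M i j ≤ (1 + ε) * v then p₀ i else 0)
        ≤ (ε / (1 + ε)) * T.card := by
      rw [Finset.sum_comm]
      calc ∑ i, ∑ j ∈ T, (if M i j ≤ (1 + ε) * v then p₀ i else 0)
          = ∑ i, ((T.filter (fun j => M i j ≤ (1 + ε) * v)).card : ℝ) * p₀ i := by
            exact Finset.sum_congr rfl fun i _ => hA i
        _ ≤ ∑ i, (ε / (1 + ε)) * T.card * p₀ i := by
            apply Finset.sum_le_sum
            intro i _
            exact mul_le_mul_of_nonneg_right (h i) (hp₀nn i)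
        _ = (ε / (1 + ε)) * T.card := by
            rw [← Finset.mul_sum, hp₀sum, mul_one]
    linarith
  -- one-step shrink
  have shrink : ∀ T : Finset (Fin c), T.Nonempty → ∃ i : Fin r,
      ((T.filter (fun j => ¬ M i j ≤ (1 + ε) * v)).card : ℝ) < T.card / (1 + ε) := by
    intro T hT
    obtain ⟨i, hi⟩ := step T hT
    refine ⟨i, ?_⟩
    have hpart := Finset.card_filter_add_card_filter_not
      (s := T) (p := fun j => M i j ≤ (1 + ε) * v)
    have hpartR : ((T.filter (fun j => M i j ≤ (1 + ε) * v)).card : ℝ)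
        + ((T.filter (fun j => ¬ M i j ≤ (1 + ε) * v)).card : ℝ) = T.card := by
      exact_mod_cast hpart
    have harith : (T.card : ℝ) - (ε / (1 + ε)) * T.card = T.card / (1 + ε) := by
      field_simp; ring
    linarith
  -- induction
  have key : ∀ m : ℕ, ∀ T : Finset (Fin c),
      ∃ S : Finset (Fin r), S.card ≤ m + 1 ∧
        ((T.filter (fun j => ∀ i ∈ S, ¬ M i j ≤ (1 + ε) * v)) = ∅ ∨
         ((T.filter (fun j => ∀ i ∈ S, ¬ M i j ≤ (1 + ε) * v)).card : ℝ)
            < T.card / (1 + ε) ^ (m + 1)) := by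
    intro m
    induction m with
    | zero =>
      intro T
      rcases T.eq_empty_or_nonempty with hTe | hT
      · exact ⟨∅, by simp, Or.inl (by simp [hTe])⟩
      · obtain ⟨i, hi⟩ := shrink T hT
        refine ⟨{i}, by simp, Or.inr ?_⟩
        have : T.filter (fun j => ∀ i' ∈ ({i} : Finset (Fin r)), ¬ M i' j ≤ (1 + ε) * v)
            = T.filter (fun j => ¬ M i j ≤ (1 + ε) * v) := by
          apply Finset.filter_congr
          intro j _
          simp
        rw [this, pow_one]
        exact hi
    | succ m ih =>
      intro T
      rcases T.eq_empty_or_nonempty with hTe | hT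
      · exact ⟨∅, by simp, Or.inl (by simp [hTe])⟩
      · obtain ⟨i, hi⟩ := shrink T hT
        set T' := T.filter (fun j => ¬ M i j ≤ (1 + ε) * v) with hT'
        obtain ⟨S', hS'card, hS'⟩ := ih T'
        refine ⟨insert i S', le_trans (Finset.card_insert_le _ _) (by omega), ?_⟩
        have hsub : T.filter (fun j => ∀ i' ∈ insert i S', ¬ M i' j ≤ (1 + ε) * v)
            ⊆ T'.filter (fun j => ∀ i' ∈ S', ¬ M i' j ≤ (1 + ε) * v) := by
          intro j hj
          simp only [Finset.mem_filter, Finset.mem_insert, hT'] at *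
          obtain ⟨hjT, hjall⟩ := hj
          exact ⟨⟨hjT, hjall i (Or.inl rfl)⟩, fun i' hi' => hjall i' (Or.inr hi')⟩
        rcases hS' with hempty | hlt
        · left
          rw [hempty] at hsub
          exact Finset.subset_empty.mp hsub
        · right
          have h1 : ((T.filter (fun j => ∀ i' ∈ insert i S', ¬ M i' j ≤ (1 + ε) * v)).card : ℝ)
              ≤ ((T'.filter (fun j => ∀ i' ∈ S', ¬ M i' j ≤ (1 + ε) * v)).card : ℝ) := by
            exact_mod_cast Finset.card_le_card hsub
          have h2 : ((T'.card : ℝ)) / (1 + ε) ^ (m + 1) < (T.card / (1 + ε)) / (1 + ε) ^ (m + 1) :=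
            (div_lt_div_iff_of_pos_right (pow_pos hεpos (m + 1))).mpr hi
          have h3 : ((T.card : ℝ) / (1 + ε)) / (1 + ε) ^ (m + 1) = T.card / (1 + ε) ^ (m + 1 + 1) := by
            rw [div_div, ← pow_succ']
          calc ((T.filter (fun j => ∀ i' ∈ insert i S', ¬ M i' j ≤ (1 + ε) * v)).card : ℝ)
              ≤ _ := h1
            _ < T'.card / (1 + ε) ^ (m + 1) := hlt
            _ < _ := h2
            _ = _ := h3
  -- conclude
  obtain ⟨S, hScard, hS⟩ := key (k - 1) Finset.univ
  have hk1 : k - 1 + 1 = k := Nat.succ_pred_eq_of_pos hk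
  rw [hk1] at hScard hS
  have hck : (c : ℝ) ≤ (1 + ε) ^ k := by
    have hlog : Real.log c ≤ k * Real.log (1 + ε) := by
      rw [div_le_iff₀ (Real.log_pos (by linarith))] at hkc
      exact hkc
    have hc1 : (1 : ℝ) ≤ (c : ℝ) := by exact_mod_cast hc
    calc (c : ℝ) = Real.exp (Real.log c) := (Real.exp_log (by linarith)).symm
      _ ≤ Real.exp (k * Real.log (1 + ε)) := Real.exp_le_exp.mpr hlog
      _ = (1 + ε) ^ k := by
          rw [← Real.log_pow, Real.exp_log (pow_pos hεpos k)]
  have hempty : Finset.univ.filter (fun j : Fin c => ∀ i ∈ S, ¬ M i j ≤ (1 + ε) * v) = ∅ := by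
    rcases hS with h | h
    · exact h
    · have hc' : (((Finset.univ : Finset (Fin c)).card : ℝ)) / (1 + ε) ^ k ≤ 1 := by
        rw [div_le_one (pow_pos hεpos k)]
        simpa using hck
      have : ((Finset.univ.filter (fun j : Fin c => ∀ i ∈ S, ¬ M i j ≤ (1 + ε) * v)).card : ℝ) < 1 :=
        lt_of_lt_of_le h hc'
      have : (Finset.univ.filter (fun j : Fin c => ∀ i ∈ S, ¬ M i j ≤ (1 + ε) * v)).card = 0 := by
        exact_mod_cast Nat.lt_one_iff.mp (by exact_mod_cast this)
      exact Finset.card_eq_zero.mp this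
  refine ⟨S, hScard, fun j => ?_⟩
  by_contra hcon
  push_neg at hcon
  have : j ∈ Finset.univ.filter (fun j : Fin c => ∀ i ∈ S, ¬ M i j ≤ (1 + ε) * v) := by
    simp only [Finset.mem_filter, Finset.mem_univ, true_and]
    intro i hiS
    exact not_le.mpr (hcon i hiS)
  rw [hempty] at this
  exact absurd this (Finset.notMem_empty j)
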